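/- Let mu be a finite R^N-valued Borel measure on a bounded open set omega in R^n with 0 < Lebesgue measure of omega < infinity, and let (mu)_omega = mu(omega)/L^n(omega). Then inf over y in R^N of the integral over omega of E(mu - y*L^n) is at most the integral over omega of E(mu - (mu)_omega * L^n), which in turn is at most 4 times that infimum. Here for a measure nu with Lebesgue decomposition nu = g L^n + nu^s, the integral of E(nu) means the integral of E(g) dL^n plus the total variation |nu^s|(omega). -/

import Mathlib

open MeasureTheory

noncomputable def areaE {N : ℕ} (z : EuclideanSpace ℝ (Fin N)) : ℝ :=
  Real.sqrt (1 + ‖z‖ ^ 2) - 1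

/-- The "integral of `E(μ - y·Lⁿ)`" for a vector measure `μ = g·Lⁿ + f·ν` with
`ν ⟂ Lⁿ` and `‖f‖ = 1` ν-a.e.: it equals `∫_ω E(g - y) dx + ν(ω)`. -/
noncomputable def areaEInt {n N : ℕ} (ω : Set (EuclideanSpace ℝ (Fin n)))
    (g : EuclideanSpace ℝ (Fin n) → EuclideanSpace ℝ (Fin N))
    (ν : Measure (EuclideanSpace ℝ (Fin n)))
    (y : EuclideanSpace ℝ (Fin N)) : ℝ :=
  (∫ x in ω, areaE (g x - y)) + (ν ω).toReal

section Aux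

lemma aux_sqrt_mul_sqrt_ge (s t : ℝ) (hs : 0 ≤ s) (ht : 0 ≤ t) :
    1 + s*t ≤ Real.sqrt (1+s^2) * Real.sqrt (1+t^2) := by
  rw [← Real.sqrt_mul (by positivity)]
  rw [show Real.sqrt ((1+s^2)*(1+t^2)) = Real.sqrt ((1+s*t)^2 + (s-t)^2) by ring_nf]
  calc 1 + s*t = Real.sqrt ((1+s*t)^2) := by
        rw [Real.sqrt_sq (by positivity)]
    _ ≤ _ := Real.sqrt_le_sqrt (by nlinarith [sq_nonneg (s-t)])

lemma aux_one_le_sqrt_one_add (u : ℝ) : 1 ≤ Real.sqrt (1 + u^2) := by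
  have : Real.sqrt 1 ≤ Real.sqrt (1+u^2) :=
    Real.sqrt_le_sqrt (le_add_of_nonneg_right (sq_nonneg u))
  simpa using this

lemma aux_sqrt_mono {s t : ℝ} (hs : 0 ≤ s) (hst : s ≤ t) :
    Real.sqrt (1+s^2) ≤ Real.sqrt (1+t^2) := by
  apply Real.sqrt_le_sqrt
  nlinarith

lemma aux_scalar_convex (s t a b : ℝ) (hs : 0 ≤ s) (ht : 0 ≤ t) (ha : 0 ≤ a) (hb : 0 ≤ b)
    (hab : a + b = 1) :
    Real.sqrt (1+(a*s+b*t)^2) ≤ a * Real.sqrt (1+s^2) + b * Real.sqrt (1+t^2) := by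
  set A := Real.sqrt (1+s^2) with hA'
  set B := Real.sqrt (1+t^2) with hB'
  set C := Real.sqrt (1+(a*s+b*t)^2) with hC'
  have hA : A ^ 2 = 1 + s^2 := Real.sq_sqrt (by positivity)
  have hB : B ^ 2 = 1 + t^2 := Real.sq_sqrt (by positivity)
  have hC : C ^ 2 = 1 + (a*s+b*t)^2 := Real.sq_sqrt (by positivity)
  have hAB := aux_sqrt_mul_sqrt_ge s t hs ht
  rw [← hA', ← hB'] at hAB
  have hA0 : 0 ≤ A := Real.sqrt_nonneg _
  have hB0 : 0 ≤ B := Real.sqrt_nonneg _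
  have hC0 : 0 ≤ C := Real.sqrt_nonneg _
  have key : C^2 ≤ (a*A+b*B)^2 := by
    have e1 : (a*A)^2 = a^2*(1+s^2) := by rw [mul_pow, hA]
    have e2 : (b*B)^2 = b^2*(1+t^2) := by rw [mul_pow, hB]
    have e3 : a*b*(1+s*t) ≤ a*b*(A*B) :=
      mul_le_mul_of_nonneg_left hAB (mul_nonneg ha hb)
    nlinarith [e1, e2, e3, sq_nonneg (a+b-1)]
  calc C = Real.sqrt (C^2) := (Real.sqrt_sq hC0).symm
    _ ≤ Real.sqrt ((a*A+b*B)^2) := Real.sqrt_le_sqrt key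
    _ = a*A+b*B := Real.sqrt_sq (by positivity)

lemma aux_scalar_add_norm (s t : ℝ) (hs : 0 ≤ s) (ht : 0 ≤ t) :
    Real.sqrt (1+(s+t)^2) ≤ Real.sqrt (1+s^2) + t := by
  set A := Real.sqrt (1+s^2) with hA'
  have hA : A ^ 2 = 1 + s^2 := Real.sq_sqrt (by positivity)
  have hA0 : 0 ≤ A := Real.sqrt_nonneg _
  have hsA : s ≤ A := by
    rw [hA']
    calc s = Real.sqrt (s^2) := (Real.sqrt_sq hs).symm
      _ ≤ _ := Real.sqrt_le_sqrt (by nlinarith)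
  calc Real.sqrt (1+(s+t)^2) ≤ Real.sqrt ((A+t)^2) := Real.sqrt_le_sqrt (by nlinarith)
    _ = A + t := Real.sqrt_sq (by positivity)

lemma aux_scalar_double (s t : ℝ) (hs : 0 ≤ s) (ht : 0 ≤ t) :
    Real.sqrt (1+(s+t)^2) + 3 ≤ 2 * Real.sqrt (1+s^2) + 2 * Real.sqrt (1+t^2) := by
  set A := Real.sqrt (1+s^2) with hA'
  set B := Real.sqrt (1+t^2) with hB'
  set C := Real.sqrt (1+(s+t)^2) with hC'
  have hA : A ^ 2 = 1 + s^2 := Real.sq_sqrt (by positivity)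
  have hB : B ^ 2 = 1 + t^2 := Real.sq_sqrt (by positivity)
  have hC : C ^ 2 = 1 + (s+t)^2 := Real.sq_sqrt (by positivity)
  have hAB := aux_sqrt_mul_sqrt_ge s t hs ht
  rw [← hA', ← hB'] at hAB
  have hA1 : 1 ≤ A := hA' ▸ aux_one_le_sqrt_one_add s
  have hB1 : 1 ≤ B := hB' ▸ aux_one_le_sqrt_one_add t
  have hC0 : 0 ≤ C := Real.sqrt_nonneg _
  have key : C^2 ≤ (2*A+2*B-3)^2 := by
    nlinarith [sq_nonneg (A+B-2)]
  have : C ≤ 2*A+2*B-3 := by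
    calc C = Real.sqrt (C^2) := (Real.sqrt_sq hC0).symm
      _ ≤ Real.sqrt ((2*A+2*B-3)^2) := Real.sqrt_le_sqrt key
      _ = 2*A+2*B-3 := Real.sqrt_sq (by linarith)
  linarith

variable {N : ℕ}

lemma continuous_areaE : Continuous (areaE (N := N)) := by
  unfold areaE
  exact (Real.continuous_sqrt.comp (continuous_const.add (continuous_norm.pow 2))).sub
    continuous_const

lemma areaE_nonneg (z : EuclideanSpace ℝ (Fin N)) : 0 ≤ areaE z :=
  sub_nonneg.2 (aux_one_le_sqrt_one_add ‖z‖)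

lemma areaE_neg (z : EuclideanSpace ℝ (Fin N)) : areaE (-z) = areaE z := by
  simp [areaE]

lemma areaE_add_norm_le (u v : EuclideanSpace ℝ (Fin N)) :
    areaE (u + v) ≤ areaE u + ‖v‖ := by
  unfold areaE
  have h1 : Real.sqrt (1+‖u+v‖^2) ≤ Real.sqrt (1+(‖u‖+‖v‖)^2) :=
    aux_sqrt_mono (norm_nonneg _) (norm_add_le u v)
  have h2 := aux_scalar_add_norm ‖u‖ ‖v‖ (norm_nonneg _) (norm_nonneg _)
  linarith

lemma areaE_le_norm (z : EuclideanSpace ℝ (Fin N)) : areaE z ≤ ‖z‖ := by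
  have := areaE_add_norm_le 0 z
  simpa [areaE] using this

lemma areaE_add_le (u v : EuclideanSpace ℝ (Fin N)) :
    areaE (u + v) ≤ 2 * areaE u + 2 * areaE v := by
  unfold areaE
  have h1 : Real.sqrt (1+‖u+v‖^2) ≤ Real.sqrt (1+(‖u‖+‖v‖)^2) :=
    aux_sqrt_mono (norm_nonneg _) (norm_add_le u v)
  have h2 := aux_scalar_double ‖u‖ ‖v‖ (norm_nonneg _) (norm_nonneg _)
  linarith

lemma convexOn_areaE : ConvexOn ℝ Set.univ (areaE (N := N)) := by
  refine ⟨convex_univ, fun x _ y _ a b ha hb hab => ?_⟩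
  have h1 : ‖a • x + b • y‖ ≤ a * ‖x‖ + b * ‖y‖ := by
    calc ‖a • x + b • y‖ ≤ ‖a • x‖ + ‖b • y‖ := norm_add_le _ _
      _ = a * ‖x‖ + b * ‖y‖ := by
          rw [norm_smul, norm_smul, Real.norm_eq_abs, Real.norm_eq_abs,
            abs_of_nonneg ha, abs_of_nonneg hb]
  have h2 : Real.sqrt (1+‖a • x + b • y‖^2) ≤ Real.sqrt (1+(a*‖x‖+b*‖y‖)^2) :=
    aux_sqrt_mono (norm_nonneg _) h1
  have h3 := aux_scalar_convex ‖x‖ ‖y‖ a b (norm_nonneg _) (norm_nonneg _) ha hb hab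
  simp only [areaE, smul_eq_mul]
  nlinarith [h2, h3]

end Aux

theorem stmt_5 {n N : ℕ} (ω : Set (EuclideanSpace ℝ (Fin n)))
    (hω : IsOpen ω) (hbd : Bornology.IsBounded ω)
    (hpos : 0 < (volume ω).toReal)
    (g : EuclideanSpace ℝ (Fin n) → EuclideanSpace ℝ (Fin N))
    (hg : IntegrableOn g ω)
    (ν : Measure (EuclideanSpace ℝ (Fin n))) [IsFiniteMeasure ν]
    (hsing : ν.MutuallySingular volume)
    (f : EuclideanSpace ℝ (Fin n) → EuclideanSpace ℝ (Fin N))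
    (hf : ∀ᵐ x ∂ν, ‖f x‖ = 1) (hfint : Integrable f ν) :
    (⨅ y : EuclideanSpace ℝ (Fin N), areaEInt ω g ν y) ≤
        areaEInt ω g ν (((volume ω).toReal)⁻¹ • ((∫ x in ω, g x) + ∫ x in ω, f x ∂ν)) ∧
      areaEInt ω g ν (((volume ω).toReal)⁻¹ • ((∫ x in ω, g x) + ∫ x in ω, f x ∂ν)) ≤
        4 * ⨅ y : EuclideanSpace ℝ (Fin N), areaEInt ω g ν y := by
  classical
  set V : ℝ := (volume ω).toReal with hV'
  have hVpos : 0 < V := hpos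
  have hfin : volume ω < ⊤ := hbd.measure_lt_top
  set ybar : EuclideanSpace ℝ (Fin N) :=
    V⁻¹ • ((∫ x in ω, g x) + ∫ x in ω, f x ∂ν) with hybar
  haveI hFin : IsFiniteMeasure (volume.restrict ω) :=
    ⟨by rw [Measure.restrict_apply_univ]; exact hfin⟩
  haveI hNZ : NeZero (volume.restrict ω) := by
    refine ⟨fun h => ?_⟩
    rw [Measure.restrict_eq_zero] at h
    rw [hV', h] at hVpos
    simp at hVpos
  -- integrability of areaE ∘ (g - y) on ω, for any y
  have hgy : ∀ y : EuclideanSpace ℝ (Fin N), IntegrableOn (fun x => g x - y) ω := fun y =>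
    hg.sub (integrableOn_const hfin.ne)
  have hint : ∀ y : EuclideanSpace ℝ (Fin N),
      IntegrableOn (fun x => areaE (g x - y)) ω := by
    intro y
    refine Integrable.mono (hgy y).norm
      (continuous_areaE.comp_aestronglyMeasurable (hgy y).aestronglyMeasurable) ?_
    refine Filter.Eventually.of_forall fun x => ?_
    rw [Real.norm_eq_abs, abs_of_nonneg (areaE_nonneg _), Real.norm_eq_abs,
      abs_of_nonneg (norm_nonneg _)]
    exact areaE_le_norm _
  have hInonneg : ∀ y : EuclideanSpace ℝ (Fin N),
      0 ≤ ∫ x in ω, areaE (g x - y) := fun y =>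
    integral_nonneg fun x => areaE_nonneg _
  have hEnonneg : ∀ y, 0 ≤ areaEInt ω g ν y := fun y =>
    add_nonneg (hInonneg y) ENNReal.toReal_nonneg
  have hbdd : BddBelow (Set.range (areaEInt ω g ν)) :=
    ⟨0, by rintro z ⟨y, rfl⟩; exact hEnonneg y⟩
  -- the key estimate
  have key : ∀ y : EuclideanSpace ℝ (Fin N), areaEInt ω g ν ybar ≤ 4 * areaEInt ω g ν y := by
    intro y
    set I : EuclideanSpace ℝ (Fin N) → ℝ := fun z => ∫ x in ω, areaE (g x - z) with hI
    -- the average of g - y over ω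
    have havg : (⨍ x in ω, (g x - y) ∂volume) = V⁻¹ • (∫ x in ω, g x) - y := by
      rw [average_eq, measureReal_restrict_apply_univ, measureReal_def]
      rw [integral_sub hg (integrableOn_const hfin.ne), setIntegral_const, measureReal_def]
      rw [smul_sub, smul_smul, ← hV', inv_mul_cancel₀ hVpos.ne', one_smul]
    -- the singular part contribution
    have hc : ‖(V⁻¹ : ℝ) • ∫ x in ω, f x ∂ν‖ ≤ V⁻¹ * (ν ω).toReal := by
      rw [norm_smul, Real.norm_eq_abs, abs_of_nonneg (inv_nonneg.2 hVpos.le)]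
      refine mul_le_mul_of_nonneg_left ?_ (inv_nonneg.2 hVpos.le)
      calc ‖∫ x in ω, f x ∂ν‖ ≤ ∫ x in ω, ‖f x‖ ∂ν := norm_integral_le_integral_norm f
        _ = ∫ x in ω, (1:ℝ) ∂ν := integral_congr_ae ((ae_restrict_of_ae hf).mono
            fun x hx => by simp [hx])
        _ = (ν ω).toReal := by rw [setIntegral_const]; simp; rfl
    -- decomposition of ybar - y
    have hdecomp : ybar - y = (⨍ x in ω, (g x - y) ∂volume) + (V⁻¹ : ℝ) • ∫ x in ω, f x ∂ν := by
      rw [havg, hybar, smul_add]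
      abel
    -- Jensen's inequality
    have hJensen : areaE (⨍ x in ω, (g x - y) ∂volume) ≤ ⨍ x in ω, areaE (g x - y) ∂volume := by
      refine convexOn_areaE.map_average_le continuous_areaE.continuousOn isClosed_univ
        (Filter.Eventually.of_forall fun _ => trivial) (hgy y) ?_
      exact hint y
    have havg2 : (⨍ x in ω, areaE (g x - y) ∂volume) = V⁻¹ * I y := by
      rw [average_eq, measureReal_restrict_apply_univ, measureReal_def, smul_eq_mul, ← hV']
    -- bound on areaE (ybar - y)
    have hbar : areaE (ybar - y) ≤ V⁻¹ * I y + V⁻¹ * (ν ω).toReal := by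
      calc areaE (ybar - y)
          ≤ areaE (⨍ x in ω, (g x - y) ∂volume) + ‖(V⁻¹ : ℝ) • ∫ x in ω, f x ∂ν‖ := by
            rw [hdecomp]; exact areaE_add_norm_le _ _
        _ ≤ V⁻¹ * I y + V⁻¹ * (ν ω).toReal := by
            rw [← havg2]; exact add_le_add hJensen hc
    -- pointwise bound
    have hpt : ∀ x, areaE (g x - ybar) ≤ 2 * areaE (g x - y) + 2 * areaE (ybar - y) := by
      intro x
      have : g x - ybar = (g x - y) + -(ybar - y) := by abel
      rw [this]
      calc areaE ((g x - y) + -(ybar - y))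
          ≤ 2 * areaE (g x - y) + 2 * areaE (-(ybar - y)) := areaE_add_le _ _
        _ = 2 * areaE (g x - y) + 2 * areaE (ybar - y) := by rw [areaE_neg]
    -- integrate the pointwise bound
    have hIbar : I ybar ≤ 2 * I y + 2 * V * areaE (ybar - y) := by
      have hRHS : IntegrableOn
          (fun x => 2 * areaE (g x - y) + 2 * areaE (ybar - y)) ω := by
        exact ((hint y).const_mul 2).add (integrableOn_const hfin.ne)
      have hmono := integral_mono (hint ybar) hRHS (fun x => hpt x)
      rw [integral_add ((hint y).const_mul 2) (integrableOn_const hfin.ne),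
        integral_const_mul, setIntegral_const, smul_eq_mul] at hmono
      calc I ybar ≤ 2 * I y + V * (2 * areaE (ybar - y)) := hmono
        _ = 2 * I y + 2 * V * areaE (ybar - y) := by ring
    -- combine
    have hν : (0:ℝ) ≤ (ν ω).toReal := ENNReal.toReal_nonneg
    have hcomb : 2 * V * areaE (ybar - y) ≤ 2 * I y + 2 * (ν ω).toReal := by
      have := mul_le_mul_of_nonneg_left hbar (by positivity : (0:ℝ) ≤ 2 * V)
      calc 2 * V * areaE (ybar - y) ≤ 2 * V * (V⁻¹ * I y + V⁻¹ * (ν ω).toReal) := this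
        _ = 2 * (V * V⁻¹) * I y + 2 * (V * V⁻¹) * (ν ω).toReal := by ring
        _ = 2 * I y + 2 * (ν ω).toReal := by
            rw [mul_inv_cancel₀ hVpos.ne']; ring
    have : I ybar ≤ 4 * I y + 2 * (ν ω).toReal := by linarith
    have hIy0 := hInonneg y
    simp only [areaEInt]
    change I ybar + (ν ω).toReal ≤ 4 * (I y + (ν ω).toReal)
    linarith
  constructor
  · exact ciInf_le hbdd ybar
  · have h4 : areaEInt ω g ν ybar / 4 ≤ ⨅ y, areaEInt ω g ν y := by
      refine le_ciInf fun y => ?_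
      have := key y
      linarith
    linarith [h4]
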